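/- Let A₁ = A and suppose A₂ is a polynomial in the Heisenberg generators A, B (i.e. A₂ lies in the subalgebra generated by A and B of the Heisenberg algebra ℂ⟨A,B⟩/⟨AB−BA−1⟩). If A₂A² + 2A·A₂·A + A²A₂ = 0, then A₂ = 0. Consequently the relations A₁A₂ + A₂A₁ = A₃ and A₁A₃ + A₃A₁ = 0 with A₁ = A force A₂ = A₃ = 0 for polynomial A₂, A₃. -/

import Mathlib

open Finsupp

/-- The coefficient-level model of `X ↦ A*X + X*A` on the Heisenberg algebra in the
ordered basis `BʲAᵏ`. -/
noncomputable def Tmap : ((ℕ × ℕ) →₀ ℂ) →ₗ[ℂ] ((ℕ × ℕ) →₀ ℂ) :=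
  Finsupp.lsum ℂ fun p => LinearMap.toSpanSingleton ℂ _
    ((2:ℂ) • Finsupp.single (p.1, p.2+1) 1 + (p.1:ℂ) • Finsupp.single (p.1-1, p.2) 1)

lemma Tmap_single (p : ℕ × ℕ) (α : ℂ) :
    Tmap (single p α) =
      α • ((2:ℂ) • single (p.1, p.2+1) (1:ℂ) + (p.1:ℂ) • single (p.1-1, p.2) 1) := by
  simp [Tmap]

lemma Tmap_apply (c : (ℕ × ℕ) →₀ ℂ) (a b : ℕ) :
    (Tmap c) (a, b+1) = 2 * c (a, b) + (a+1) * c (a+1, b+1) := by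
  induction c using Finsupp.induction_linear with
  | zero => simp
  | add f g hf hg => simp [hf, hg]; ring
  | single p α =>
    obtain ⟨x, y⟩ := p
    rw [Tmap_single]
    simp only [Finsupp.smul_apply, Finsupp.add_apply, Finsupp.single_apply, Prod.mk.injEq,
      smul_eq_mul, mul_ite, mul_zero, mul_one]
    split_ifs <;>
      first
      | (exfalso; omega)
      | ring1
      | (obtain ⟨rfl, rfl⟩ : x = a + 1 ∧ y = b + 1 := (by omega); push_cast; ring1)
      | (obtain rfl : x = 0 := (by omega); obtain rfl : a = 0 := (by omega); norm_num)

lemma Tmap_injective_zero (c : (ℕ × ℕ) →₀ ℂ) (h : Tmap c = 0) : c = 0 := by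
  set N := (c.support.sup fun p => p.1) + 1 with hNdef
  have hN : ∀ p ∈ c.support, p.1 < N := by
    intro p hp
    have h' : p.1 ≤ c.support.sup fun q => q.1 := Finset.le_sup hp
    omega
  have key : ∀ d a b, N ≤ a + d → c (a, b) = 0 := by
    intro d
    induction d with
    | zero =>
      intro a b hab
      by_contra hc
      have := hN (a, b) (Finsupp.mem_support_iff.mpr hc)
      simp at this; omega
    | succ d ih =>
      intro a b hab
      by_cases hcase : N ≤ a + d
      · exact ih a b hcase
      · have h1 : (Tmap c) (a, b+1) = 0 := by rw [h]; rfl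
        rw [Tmap_apply, ih (a+1) (b+1) (by omega), mul_zero, add_zero] at h1
        exact (mul_eq_zero.mp h1).resolve_left (by norm_num)
  ext p
  exact key N p.1 p.2 (by omega)

section Heisenberg

variable {R : Type*} [Ring R] [Algebra ℂ R] (A B : R)

lemma A_mul_B_pow (hH : A * B - B * A = 1) (j : ℕ) :
    A * B ^ j = B ^ j * A + (j : ℂ) • B ^ (j - 1) := by
  have hAB : A * B = B * A + 1 := by rw [← hH]; abel
  induction j with
  | zero => simp
  | succ j ih =>
    rw [pow_succ, ← mul_assoc, ih]
    rw [add_mul, smul_mul_assoc, mul_assoc, hAB]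
    have hBB : (j : ℂ) • (B ^ (j - 1) * B) = (j : ℂ) • B ^ j := by
      cases j with
      | zero => simp
      | succ m => rw [Nat.add_sub_cancel, ← pow_succ]
    rw [hBB, Nat.add_sub_cancel, mul_add, mul_one, ← mul_assoc, ← pow_succ]
    push_cast
    rw [add_smul, one_smul]
    abel

lemma A_pow_mul_B (hH : A * B - B * A = 1) (k : ℕ) :
    A ^ k * B = B * A ^ k + (k : ℂ) • A ^ (k - 1) := by
  have hAB : A * B = B * A + 1 := by rw [← hH]; abel
  induction k with
  | zero => simp
  | succ k ih =>
    rw [pow_succ, mul_assoc, hAB, mul_add, mul_one, ← mul_assoc, ih]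
    have hAA : (k : ℂ) • (A ^ (k - 1) * A) = (k : ℂ) • A ^ k := by
      cases k with
      | zero => simp
      | succ m => rw [Nat.add_sub_cancel, ← pow_succ]
    rw [add_mul, smul_mul_assoc, hAA, mul_assoc, ← pow_succ, Nat.add_sub_cancel]
    push_cast
    rw [add_smul, one_smul]
    abel

/-- the linear combination map sending coefficients to elements of `R`. -/
noncomputable def phi : ((ℕ × ℕ) →₀ ℂ) →ₗ[ℂ] R :=
  Finsupp.linearCombination ℂ (fun p : ℕ × ℕ => B ^ p.1 * A ^ p.2)

lemma phi_S (hH : A * B - B * A = 1) (c : (ℕ × ℕ) →₀ ℂ) :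
    A * phi A B c + phi A B c * A = phi A B (Tmap c) := by
  induction c using Finsupp.induction_linear with
  | zero => simp
  | add f g hf hg =>
    rw [map_add, map_add, map_add, ← hf, ← hg, mul_add, add_mul]; abel
  | single p α =>
    obtain ⟨j, k⟩ := p
    rw [Tmap_single, map_smul, map_add, map_smul, map_smul]
    unfold phi
    rw [Finsupp.linearCombination_single, Finsupp.linearCombination_single,
      Finsupp.linearCombination_single]
    simp only [one_smul]
    rw [mul_smul_comm, smul_mul_assoc]
    rw [← smul_add]
    congr 1
    have h1 : A * (B ^ j * A ^ k) = B ^ j * A ^ (k+1) + (j:ℂ) • (B ^ (j-1) * A ^ k) := by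
      rw [← mul_assoc, A_mul_B_pow A B hH, add_mul, smul_mul_assoc, mul_assoc, ← pow_succ']
    have h2 : (B ^ j * A ^ k) * A = B ^ j * A ^ (k+1) := by
      rw [mul_assoc, ← pow_succ]
    rw [h1, h2]
    rw [two_smul]
    abel

lemma mem_range_phi (hH : A * B - B * A = 1) {x : R}
    (hx : x ∈ Algebra.adjoin ℂ ({A, B} : Set R)) :
    ∃ c, phi A B c = x := by
  set M : Submodule ℂ R :=
    Submodule.span ℂ (Set.range fun p : ℕ × ℕ => B ^ p.1 * A ^ p.2) with hM
  have hrange : ∀ y, y ∈ M ↔ ∃ c, phi A B c = y := by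
    intro y
    rw [hM, ← Finsupp.range_linearCombination]
    exact ⟨fun h => h, fun h => h⟩
  have hmono : ∀ j k : ℕ, B ^ j * A ^ k ∈ M := fun j k =>
    Submodule.subset_span ⟨(j, k), rfl⟩
  have hA : ∀ x ∈ M, x * A ∈ M := by
    intro x hx
    induction hx using Submodule.span_induction with
    | mem z hz =>
      obtain ⟨⟨j, k⟩, rfl⟩ := hz
      have : B ^ j * A ^ k * A = B ^ j * A ^ (k+1) := by rw [mul_assoc, ← pow_succ]
      rw [this]; exact hmono j (k+1)
    | zero => simp
    | add u v _ _ hu hv => rw [add_mul]; exact add_mem hu hv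
    | smul r u _ hu => rw [smul_mul_assoc]; exact Submodule.smul_mem _ _ hu
  have hB : ∀ x ∈ M, x * B ∈ M := by
    intro x hx
    induction hx using Submodule.span_induction with
    | mem z hz =>
      obtain ⟨⟨j, k⟩, rfl⟩ := hz
      have : B ^ j * A ^ k * B = B ^ (j+1) * A ^ k + (k:ℂ) • (B ^ j * A ^ (k-1)) := by
        rw [mul_assoc, A_pow_mul_B A B hH, mul_add, ← mul_assoc, ← pow_succ,
          mul_smul_comm]
      rw [this]
      exact add_mem (hmono (j+1) k) (Submodule.smul_mem _ _ (hmono j (k-1)))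
    | zero => simp
    | add u v _ _ hu hv => rw [add_mul]; exact add_mem hu hv
    | smul r u _ hu => rw [smul_mul_assoc]; exact Submodule.smul_mem _ _ hu
  have hone : (1 : R) ∈ M := by
    have := hmono 0 0; simpa using this
  have main : ∀ y ∈ Algebra.adjoin ℂ ({A, B} : Set R), ∀ x ∈ M, x * y ∈ M := by
    intro y hy
    induction hy using Algebra.adjoin_induction with
    | mem z hz =>
      rcases hz with rfl | hz
      · exact hA
      · rw [Set.mem_singleton_iff] at hz; subst hz; exact hB
    | algebraMap r =>
      intro x hx
      have : x * algebraMap ℂ R r = r • x := by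
        rw [Algebra.smul_def, ← Algebra.commutes]
      rw [this]; exact Submodule.smul_mem _ _ hx
    | add u v _ _ hu hv =>
      intro x hx
      rw [mul_add]; exact add_mem (hu x hx) (hv x hx)
    | mul u v _ _ hu hv =>
      intro x hx
      rw [← mul_assoc]; exact hv _ (hu x hx)
  have : x ∈ M := by
    have := main x hx 1 hone
    simpa using this
  exact (hrange x).mp this

end Heisenberg

/-- In the Heisenberg algebra (a unital associative `ℂ`-algebra generated by `A`, `B` with
`AB - BA = 1` in which the ordered monomials `BʲAᵏ` are linearly independent),
no nonzero polynomial in `A`, `B` can satisfy `A₂A² + 2A·A₂·A + A²A₂ = 0`; consequently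
with `A₁ = A` the first two color Heisenberg relations force `A₂ = A₃ = 0`. -/
theorem no_polynomial_solution {R : Type*} [Ring R] [Algebra ℂ R]
    (A B : R) (hH : A * B - B * A = 1)
    (hbasis : LinearIndependent ℂ (fun p : ℕ × ℕ => B ^ p.1 * A ^ p.2)) :
    (∀ A₂ : R, A₂ ∈ Algebra.adjoin ℂ ({A, B} : Set R) →
        A₂ * A ^ 2 + 2 • (A * A₂ * A) + A ^ 2 * A₂ = 0 → A₂ = 0) ∧
    (∀ A₂ A₃ : R, A₂ ∈ Algebra.adjoin ℂ ({A, B} : Set R) →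
        A₃ ∈ Algebra.adjoin ℂ ({A, B} : Set R) →
        A * A₂ + A₂ * A = A₃ → A * A₃ + A₃ * A = 0 → A₂ = 0 ∧ A₃ = 0) := by
  have hinj : ∀ c : (ℕ × ℕ) →₀ ℂ, phi A B c = 0 → c = 0 :=
    linearIndependent_iff.mp hbasis
  have part1 : ∀ A₂ : R, A₂ ∈ Algebra.adjoin ℂ ({A, B} : Set R) →
      A₂ * A ^ 2 + 2 • (A * A₂ * A) + A ^ 2 * A₂ = 0 → A₂ = 0 := by
    intro A₂ hmem h
    obtain ⟨c, hc⟩ := mem_range_phi A B hH hmem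
    have key : A * (A * A₂ + A₂ * A) + (A * A₂ + A₂ * A) * A
        = A₂ * A ^ 2 + 2 • (A * A₂ * A) + A ^ 2 * A₂ := by
      rw [two_smul]; noncomm_ring
    have h1 : A * A₂ + A₂ * A = phi A B (Tmap c) := by
      rw [← hc]; exact phi_S A B hH c
    have h2 : phi A B (Tmap (Tmap c)) = 0 := by
      rw [← phi_S A B hH (Tmap c), ← h1, key, h]
    have h3 := hinj _ h2
    have h4 := Tmap_injective_zero _ h3
    have h5 := Tmap_injective_zero _ h4
    rw [← hc, h5, map_zero]
  refine ⟨part1, ?_⟩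
  intro A₂ A₃ h2mem _ hrel1 hrel2
  have h : A₂ * A ^ 2 + 2 • (A * A₂ * A) + A ^ 2 * A₂ = 0 := by
    rw [← hrel1] at hrel2
    rw [← hrel2, two_smul]; noncomm_ring
  have h2 := part1 A₂ h2mem h
  subst h2
  simp at hrel1
  exact ⟨rfl, hrel1.symm⟩
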